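/- For a zero-mean p-variate random signal x on a graph G with Laplacian L = U Λ U* (U unitary), the matrices Cov(x_a, x_b) and L are simultaneously diagonalizable (by U) for all a, b ∈ {0,…,p−1} if and only if the multivariate GFT spectra satisfy Cov(x̂_a(λ_k), x̂_b(λ_l)) = 0 whenever k ≠ l. -/
import Mathlib


open Matrix MeasureTheory

/-- `A` is diagonalized by the unitary matrix `U`. -/
def DiagBy {N : ℕ} (U A : Matrix (Fin N) (Fin N) ℂ) : Prop :=
  ∃ d : Fin N → ℂ, A = U * Matrix.diagonal d * Uᴴ

lemma diagBy_iff_offdiag_zero {N : ℕ} (U : Matrix (Fin N) (Fin N) ℂ)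
    (hU : U ∈ Matrix.unitaryGroup (Fin N) ℂ) (A : Matrix (Fin N) (Fin N) ℂ) :
    DiagBy U A ↔ ∀ k l, k ≠ l → (Uᴴ * A * U) k l = 0 := by
  have hU1 : Uᴴ * U = 1 := by
    simpa [Matrix.star_eq_conjTranspose] using Matrix.mem_unitaryGroup_iff'.mp hU
  have hU2 : U * Uᴴ = 1 := by
    simpa [Matrix.star_eq_conjTranspose] using Matrix.mem_unitaryGroup_iff.mp hU
  constructor
  · rintro ⟨d, rfl⟩ k l hkl
    have h : Uᴴ * (U * Matrix.diagonal d * Uᴴ) * U = Matrix.diagonal d := by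
      rw [← Matrix.mul_assoc, ← Matrix.mul_assoc, hU1, Matrix.one_mul,
        Matrix.mul_assoc, hU1, Matrix.mul_one]
    rw [h, Matrix.diagonal_apply_ne _ hkl]
  · intro h
    refine ⟨fun k => (Uᴴ * A * U) k k, ?_⟩
    have hD : Uᴴ * A * U = Matrix.diagonal fun k => (Uᴴ * A * U) k k := by
      ext k l
      by_cases hkl : k = l
      · subst hkl; simp [Matrix.diagonal_apply_eq]
      · rw [Matrix.diagonal_apply_ne _ hkl]; exact h k l hkl
    calc A = (U * Uᴴ) * A * (U * Uᴴ) := by rw [hU2, Matrix.one_mul, Matrix.mul_one]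
      _ = U * (Uᴴ * A * U) * Uᴴ := by
          simp only [Matrix.mul_assoc]
      _ = U * Matrix.diagonal (fun k => (Uᴴ * A * U) k k) * Uᴴ := by conv_lhs => rw [hD]

/-- Corollary of the paper for multivariate graph signals: for a zero-mean
`p`-variate random signal `x` on a graph `G` with Laplacian `L = U Λ Uᴴ`
(`U` unitary), the matrices `Cov(x_a, x_b)` and `L` are simultaneously
diagonalizable (by `U`) for all `a, b` iff the multivariate GFT spectra
satisfy `Cov(x̂_a(λ_k), x̂_b(λ_l)) = 0` whenever `k ≠ l`. -/
theorem multivariate_simdiag_iff_spectral_uncorrelated (N p : ℕ)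
    {Ω : Type*} [MeasurableSpace Ω] (μ : Measure Ω) [IsProbabilityMeasure μ]
    (U : Matrix (Fin N) (Fin N) ℂ)
    (hU : U ∈ Matrix.unitaryGroup (Fin N) ℂ)
    (lam : Fin N → ℝ)
    (L : Matrix (Fin N) (Fin N) ℂ)
    (hL : L = U * Matrix.diagonal (fun k => (lam k : ℂ)) * Uᴴ)
    (x : Fin p → Fin N → Ω → ℝ)
    (hmeas : ∀ a i, Measurable (x a i))
    (hzero : ∀ a i, ∫ ω, x a i ω ∂μ = 0)
    (hint : ∀ a b i j, Integrable (fun ω => x a i ω * x b j ω) μ) :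
    -- the multivariate GFT spectrum x̂_a(λ_k) = Σ_i x_a(i) conj(u_k(i))
    let xhat : Fin p → Fin N → Ω → ℂ :=
      fun a k ω => ∑ i, (x a i ω : ℂ) * (starRingEnd ℂ) (U i k)
    (∀ a b, DiagBy U (Matrix.of fun i j =>
        ((∫ ω, x a i ω * x b j ω ∂μ : ℝ) : ℂ)))
      ↔ (∀ a b (k l : Fin N), k ≠ l →
          (∫ ω, xhat a k ω * (starRingEnd ℂ) (xhat b l ω) ∂μ) = 0) := by
  intro xhat
  set C : Fin p → Fin p → Matrix (Fin N) (Fin N) ℂ :=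
    fun a b => Matrix.of fun i j => ((∫ ω, x a i ω * x b j ω ∂μ : ℝ) : ℂ) with hC
  have key : ∀ a b (k l : Fin N),
      (∫ ω, xhat a k ω * (starRingEnd ℂ) (xhat b l ω) ∂μ) = (Uᴴ * C a b * U) k l := by
    intro a b k l
    have hpt : ∀ ω, xhat a k ω * (starRingEnd ℂ) (xhat b l ω)
        = ∑ i, ∑ j, ((x a i ω * x b j ω : ℝ) : ℂ) * ((starRingEnd ℂ) (U i k) * U j l) := by
      intro ω
      have : (starRingEnd ℂ) (xhat b l ω) = ∑ j, (x b j ω : ℂ) * U j l := by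
        simp [xhat, map_sum, _root_.map_mul, Complex.conj_ofReal]
      rw [this]
      simp only [xhat, Finset.sum_mul_sum]
      refine Finset.sum_congr rfl fun i _ => Finset.sum_congr rfl fun j _ => ?_
      push_cast
      ring
    have hterm : ∀ (i j : Fin N),
        Integrable (fun ω => ((x a i ω * x b j ω : ℝ) : ℂ)
          * ((starRingEnd ℂ) (U i k) * U j l)) μ :=
      fun i j => ((hint a b i j).ofReal).mul_const _
    calc (∫ ω, xhat a k ω * (starRingEnd ℂ) (xhat b l ω) ∂μ)
        = ∫ ω, ∑ i, ∑ j, ((x a i ω * x b j ω : ℝ) : ℂ)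
            * ((starRingEnd ℂ) (U i k) * U j l) ∂μ := by
          exact integral_congr_ae (Filter.Eventually.of_forall hpt)
      _ = ∑ i, ∑ j, ∫ ω, ((x a i ω * x b j ω : ℝ) : ℂ)
            * ((starRingEnd ℂ) (U i k) * U j l) ∂μ := by
          rw [integral_finset_sum _ fun i _ => integrable_finset_sum _ fun j _ => hterm i j]
          exact Finset.sum_congr rfl fun i _ =>
            integral_finset_sum _ fun j _ => hterm i j
      _ = ∑ i, ∑ j, ((∫ ω, x a i ω * x b j ω ∂μ : ℝ) : ℂ)
            * ((starRingEnd ℂ) (U i k) * U j l) := by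
          refine Finset.sum_congr rfl fun i _ => Finset.sum_congr rfl fun j _ => ?_
          rw [integral_mul_const]
          congr 1
          exact integral_ofReal
      _ = (Uᴴ * C a b * U) k l := by
          simp only [Matrix.mul_apply, Matrix.conjTranspose_apply, Matrix.of_apply,
            Finset.sum_mul, hC, starRingEnd_apply]
          rw [Finset.sum_comm]
          refine Finset.sum_congr rfl fun i _ => Finset.sum_congr rfl fun j _ => ?_
          ring
  constructor
  · intro h a b k l hkl
    rw [key a b k l]
    exact (diagBy_iff_offdiag_zero U hU (C a b)).mp (h a b) k l hkl
  · intro h a b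
    exact (diagBy_iff_offdiag_zero U hU (C a b)).mpr fun k l hkl =>
      (key a b k l) ▸ h a b k l hkl
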